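/- (Generalized Nakano–Roberts Theorem) Suppose (E₁, τ₁) is a locally solid Riesz space and (E₂, τ₂) is a Dedekind complete locally solid Riesz space having an order bounded τ₂-neighborhood of zero. Then the space L_TC(E₁, E₂) of topologically continuous operators is an ideal of the Riesz space L_B(E₁, E₂) of order bounded operators; that is, if S is order bounded, T is topologically continuous, and |S| ≤ |T| in L_B(E₁, E₂), then S is topologically continuous. -/

import Mathlib

open Filter Topology Bornology Set

/-- A subset of a Riesz space is solid if `|x| ≤ |y|` and `y ∈ S` imply `x ∈ S`. -/
def SolidSet {E : Type*} [Lattice E] [AddCommGroup E] (S : Set E) : Prop :=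
  ∀ ⦃x y : E⦄, |x| ≤ |y| → y ∈ S → x ∈ S

/-- A linear topology on a Riesz space is locally solid if the neighborhood filter at zero
has a basis of solid sets. -/
def LocallySolid (E : Type*) [Lattice E] [AddCommGroup E] [TopologicalSpace E] : Prop :=
  (𝓝 (0 : E)).HasBasis (fun S : Set E => S ∈ 𝓝 (0 : E) ∧ SolidSet S) id

/-- The order on operators: `S ≤ T` iff `T - S` is positive, i.e. `S x ≤ T x` for
all `x ≥ 0`. -/
def opLe {E₁ E₂ : Type*} [AddCommGroup E₁] [AddCommGroup E₂] [Lattice E₁] [Lattice E₂]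
    [Module ℝ E₁] [Module ℝ E₂] (S T : E₁ →ₗ[ℝ] E₂) : Prop :=
  ∀ x : E₁, 0 ≤ x → S x ≤ T x

/-- `A` is the modulus `|S|` of the operator `S` in the operator order:
`A` is the least upper bound of `S` and `-S`. -/
def IsModulus {E₁ E₂ : Type*} [AddCommGroup E₁] [AddCommGroup E₂] [Lattice E₁] [Lattice E₂]
    [Module ℝ E₁] [Module ℝ E₂] (S A : E₁ →ₗ[ℝ] E₂) : Prop :=
  opLe S A ∧ opLe (-S) A ∧ ∀ R : E₁ →ₗ[ℝ] E₂, opLe S R → opLe (-S) R → opLe A R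

section NakanoHelpers

variable {E : Type*} [AddCommGroup E] [Lattice E]
  [CovariantClass E E (· + ·) (· ≤ ·)]

/-- Triangle inequality in a lattice-ordered group. -/
theorem nakano_abs_add (a b : E) : |a + b| ≤ |a| + |b| := by
  rw [abs_le']
  refine ⟨add_le_add (le_abs_self a) (le_abs_self b), ?_⟩
  rw [neg_add]
  exact add_le_add (neg_le_abs a) (neg_le_abs b)

/-- Riesz decomposition property in a lattice-ordered group. -/
theorem nakano_riesz_decomp {u v y : E} (hu : 0 ≤ u) (hv : 0 ≤ v)
    (hy : |y| ≤ u + v) : ∃ y₁ y₂ : E, y = y₁ + y₂ ∧ |y₁| ≤ u ∧ |y₂| ≤ v := by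
  have hy1 : y ≤ u + v := (le_abs_self y).trans hy
  have hy2 : -(u + v) ≤ y := neg_le.mp ((neg_le_abs y).trans hy)
  refine ⟨(y ⊓ u) ⊔ (-u), y - ((y ⊓ u) ⊔ (-u)), by abel, ?_, ?_⟩
  · rw [abs_le']
    refine ⟨sup_le (inf_le_right) (neg_le_self hu), ?_⟩
    rw [neg_sup, neg_neg]
    exact inf_le_right
  · have e : y - ((y ⊓ u) ⊔ (-u)) = (0 ⊔ (y - u)) ⊓ (y + u) := by
      rw [sub_sup, sub_inf, sub_self, sub_neg_eq_add]
    rw [e, abs_le']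
    constructor
    · refine inf_le_left.trans (sup_le hv ?_)
      rw [sub_le_iff_le_add]
      exact hy1.trans_eq (add_comm u v)
    · rw [neg_le]
      refine le_inf ((neg_nonpos.mpr hv).trans le_sup_left) ?_
      rw [← sub_le_iff_le_add]
      calc -v - u = -(u + v) := by abel
        _ ≤ y := hy2

/-- The least upper bound of a sum set. -/
theorem nakano_isLUB_add {A B : Set E} {sa sb : E} (ha : IsLUB A sa) (hb : IsLUB B sb) :
    IsLUB (Set.image2 (· + ·) A B) (sa + sb) := by
  constructor
  · rintro _ ⟨a, haA, b, hbB, rfl⟩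
    exact add_le_add (ha.1 haA) (hb.1 hbB)
  · intro c hc
    rw [← le_sub_iff_add_le]
    refine ha.2 ?_
    intro a haA
    rw [le_sub_iff_add_le, add_comm, ← le_sub_iff_add_le]
    refine hb.2 ?_
    intro b hbB
    rw [le_sub_iff_add_le, add_comm]
    exact hc (Set.mem_image2_of_mem haA hbB)

variable [Module ℝ E] [PosSMulMono ℝ E]

theorem nakano_smul_sup {c : ℝ} (hc : 0 < c) (a b : E) :
    c • (a ⊔ b) = (c • a) ⊔ (c • b) :=
  (OrderIso.smulRight hc (β := E)).map_sup a b

theorem nakano_smul_abs {c : ℝ} (hc : 0 ≤ c) (a : E) : |c • a| = c • |a| := by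
  rcases hc.eq_or_lt with rfl | hc
  · simp
  · rw [abs, abs, nakano_smul_sup hc, smul_neg]

theorem nakano_smul_posPart {c : ℝ} (hc : 0 ≤ c) (a : E) : (c • a)⁺ = c • a⁺ := by
  rcases hc.eq_or_lt with rfl | hc
  · simp
  · rw [posPart_def, posPart_def, nakano_smul_sup hc, smul_zero]

theorem nakano_smul_negPart {c : ℝ} (hc : 0 ≤ c) (a : E) : (c • a)⁻ = c • a⁻ := by
  rcases hc.eq_or_lt with rfl | hc
  · simp
  · rw [negPart_def, negPart_def, nakano_smul_sup hc, smul_zero, smul_neg]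

theorem nakano_isLUB_smul {c : ℝ} (hc : 0 < c) {B : Set E} {s : E} (h : IsLUB B s) :
    IsLUB ((fun x => c • x) '' B) (c • s) :=
  (OrderIso.smulRight hc (β := E)).isLUB_image'.mpr h

end NakanoHelpers

/-- Generalized Nakano–Roberts theorem: if `E₁` is a locally solid Riesz space and `E₂`
is a Dedekind complete locally solid Riesz space with an order bounded neighborhood of
zero, then the topologically continuous operators form an ideal of the order bounded
operators: if `S` is order bounded, `T` is topologically continuous and `|S| ≤ |T|`,
then `S` is topologically continuous. -/
theorem stmt5 {E₁ E₂ : Type*}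
    [AddCommGroup E₁] [Lattice E₁] [Module ℝ E₁]
    [CovariantClass E₁ E₁ (· + ·) (· ≤ ·)] [PosSMulMono ℝ E₁]
    [TopologicalSpace E₁] [IsTopologicalAddGroup E₁] [ContinuousSMul ℝ E₁]
    [AddCommGroup E₂] [Lattice E₂] [Module ℝ E₂]
    [CovariantClass E₂ E₂ (· + ·) (· ≤ ·)] [PosSMulMono ℝ E₂]
    [TopologicalSpace E₂] [IsTopologicalAddGroup E₂] [ContinuousSMul ℝ E₂]
    (hls₁ : LocallySolid E₁) (hls₂ : LocallySolid E₂)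
    (hded : ∀ A : Set E₂, A.Nonempty → BddAbove A → ∃ s, IsLUB A s)
    (hV : ∃ V ∈ 𝓝 (0 : E₂), ∃ a b : E₂, V ⊆ Set.Icc a b)
    (S T : E₁ →ₗ[ℝ] E₂)
    (hSb : ∀ B : Set E₁, (∃ a b : E₁, B ⊆ Set.Icc a b) →
      ∃ a b : E₂, S '' B ⊆ Set.Icc a b)
    (hTc : Continuous T)
    (aS aT : E₁ →ₗ[ℝ] E₂) (hmS : IsModulus S aS) (hmT : IsModulus T aT)
    (hle : opLe aS aT) :
    Continuous S := by
  classical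
  -- `|S' x| ≤ A' |x|` for any modulus pair
  have habs : ∀ (S' A' : E₁ →ₗ[ℝ] E₂), IsModulus S' A' → ∀ x : E₁, |S' x| ≤ A' |x| := by
    intro S' A' hm x
    have h1 : S' x⁺ ≤ A' x⁺ := hm.1 _ (posPart_nonneg _)
    have h2 : -S' x⁻ ≤ A' x⁻ := by
      have := hm.2.1 _ (negPart_nonneg x)
      rwa [LinearMap.neg_apply] at this
    have h3 : -S' x⁺ ≤ A' x⁺ := by
      have := hm.2.1 _ (posPart_nonneg x)
      rwa [LinearMap.neg_apply] at this
    have h4 : S' x⁻ ≤ A' x⁻ := hm.1 _ (negPart_nonneg _)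
    rw [abs_le']
    constructor
    · calc S' x = S' x⁺ + -(S' x⁻) := by rw [← sub_eq_add_neg, ← map_sub, posPart_sub_negPart]
        _ ≤ A' x⁺ + A' x⁻ := add_le_add h1 h2
        _ = A' |x| := by rw [← map_add, posPart_add_negPart]
    · have e : -(S' x) = S' x⁻ + -(S' x⁺) := by
        rw [← sub_eq_add_neg, ← map_sub,
          show x⁻ - x⁺ = -x from by
            rw [← posPart_neg x, ← negPart_neg x, posPart_sub_negPart], map_neg]
      rw [e]
      calc S' x⁻ + -(S' x⁺) ≤ A' x⁻ + A' x⁺ := add_le_add h4 h3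
        _ = A' |x| := by rw [← map_add, add_comm, posPart_add_negPart]
  -- `aT` is positive and monotone
  have haT0 : ∀ x : E₁, 0 ≤ x → 0 ≤ aT x := by
    intro x hx
    have h1 := hmT.1 x hx
    have h2 := hmT.2.1 x hx
    rw [LinearMap.neg_apply] at h2
    have h3 : (0 : E₂) ≤ aT x + aT x := by
      have := add_le_add h2 h1
      simpa using this
    calc (0 : E₂) = ((1:ℝ)/2) • (0 : E₂) := by simp
      _ ≤ ((1:ℝ)/2) • (aT x + aT x) := smul_le_smul_of_nonneg_left h3 (by norm_num)
      _ = aT x := by rw [← two_smul ℝ (aT x), smul_smul]; norm_num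
  have haTmono : ∀ x y : E₁, x ≤ y → aT x ≤ aT y := by
    intro x y hxy
    have := haT0 (y - x) (sub_nonneg.mpr hxy)
    rw [map_sub] at this
    exact sub_nonneg.mp this
  -- The Riesz–Kantorovich sup
  set A : E₁ → Set E₂ := fun u => T '' {y | |y| ≤ u} with hAdef
  have hmemA : ∀ u : E₁, 0 ≤ u → (0 : E₂) ∈ A u := by
    intro u hu
    exact ⟨0, by simpa using hu, map_zero T⟩
  have hbddA : ∀ u : E₁, 0 ≤ u → aT u ∈ upperBounds (A u) := by
    rintro u hu _ ⟨y, hy, rfl⟩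
    calc T y ≤ |T y| := le_abs_self _
      _ ≤ aT |y| := habs T aT hmT y
      _ ≤ aT u := haTmono _ _ hy
  have hLUB : ∀ u : E₁, ∃ s : E₂, 0 ≤ u → IsLUB (A u) s := by
    intro u
    by_cases hu : 0 ≤ u
    · obtain ⟨s, hs⟩ := hded (A u) ⟨0, hmemA u hu⟩ ⟨aT u, hbddA u hu⟩
      exact ⟨s, fun _ => hs⟩
    · exact ⟨0, fun h => absurd h hu⟩
  choose p hp using hLUB
  -- additivity of `p` on the positive cone
  have hpadd : ∀ u v : E₁, 0 ≤ u → 0 ≤ v → p (u + v) = p u + p v := by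
    intro u v hu hv
    have huv : 0 ≤ u + v := add_nonneg hu hv
    refine (hp _ huv).unique ?_
    constructor
    · rintro _ ⟨y, hy, rfl⟩
      obtain ⟨y₁, y₂, rfl, h1, h2⟩ := nakano_riesz_decomp hu hv hy
      rw [map_add]
      exact add_le_add ((hp u hu).1 ⟨y₁, h1, rfl⟩) ((hp v hv).1 ⟨y₂, h2, rfl⟩)
    · intro c hc
      rw [← le_sub_iff_add_le]
      refine (hp u hu).2 ?_
      rintro _ ⟨y₁, hy₁, rfl⟩
      rw [le_sub_iff_add_le, add_comm, ← le_sub_iff_add_le]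
      refine (hp v hv).2 ?_
      rintro _ ⟨y₂, hy₂, rfl⟩
      rw [le_sub_iff_add_le, add_comm, ← map_add]
      exact hc ⟨y₁ + y₂, (nakano_abs_add _ _).trans (add_le_add hy₁ hy₂), rfl⟩
  have hp0 : p 0 = 0 := by
    refine (hp 0 le_rfl).unique ?_
    have hset : A 0 = {0} := by
      ext z
      constructor
      · rintro ⟨y, hy, rfl⟩
        rw [Set.mem_setOf_eq] at hy
        have habs0 : |y| = 0 := le_antisymm hy (abs_nonneg y)
        have hy0 : y = 0 := le_antisymm ((le_abs_self y).trans_eq habs0)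
          (neg_nonpos.mp ((neg_le_abs y).trans_eq habs0))
        simp [hy0]
      · rintro rfl
        exact ⟨0, by simp, map_zero T⟩
    rw [hset]
    exact isLUB_singleton
  -- positive homogeneity of `p`
  have hpsmul : ∀ (c : ℝ) (u : E₁), 0 < c → 0 ≤ u → p (c • u) = c • p u := by
    intro c u hc hu
    have hcu : 0 ≤ c • u := smul_nonneg hc.le hu
    refine (hp _ hcu).unique ?_
    have hset : A (c • u) = (fun x : E₂ => c • x) '' A u := by
      rw [hAdef]
      ext z
      simp only [Set.mem_image, Set.mem_setOf_eq]
      constructor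
      · rintro ⟨y, hy, rfl⟩
        refine ⟨T (c⁻¹ • y), ⟨c⁻¹ • y, ?_, rfl⟩, ?_⟩
        · rw [nakano_smul_abs (by positivity)]
          calc c⁻¹ • |y| ≤ c⁻¹ • (c • u) :=
              smul_le_smul_of_nonneg_left hy (by positivity)
            _ = u := inv_smul_smul₀ hc.ne' u
        · rw [← map_smul, smul_inv_smul₀ hc.ne']
      · rintro ⟨_, ⟨y, hy, rfl⟩, rfl⟩
        refine ⟨c • y, ?_, map_smul T c y⟩
        rw [nakano_smul_abs hc.le]
        exact smul_le_smul_of_nonneg_left hy hc.le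
    rw [hset]
    exact nakano_isLUB_smul hc (hp u hu)
  -- the linear extension `R`
  have hqadd : ∀ x y : E₁, p (x + y)⁺ - p (x + y)⁻ = (p x⁺ - p x⁻) + (p y⁺ - p y⁻) := by
    intro x y
    have key : (x + y)⁺ + (x⁻ + y⁻) = (x + y)⁻ + (x⁺ + y⁺) := by
      have e : ((x + y)⁺ + (x⁻ + y⁻)) - ((x + y)⁻ + (x⁺ + y⁺)) =
          ((x + y)⁺ - (x + y)⁻) - ((x⁺ - x⁻) + (y⁺ - y⁻)) := by abel
      rw [posPart_sub_negPart, posPart_sub_negPart, posPart_sub_negPart] at e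
      have e2 : ((x + y)⁺ + (x⁻ + y⁻)) - ((x + y)⁻ + (x⁺ + y⁺)) = 0 := by
        rw [e]; abel
      exact sub_eq_zero.mp e2
    have h1 : p ((x + y)⁺ + (x⁻ + y⁻)) = p (x + y)⁺ + (p x⁻ + p y⁻) := by
      rw [hpadd _ _ (posPart_nonneg _) (add_nonneg (negPart_nonneg _) (negPart_nonneg _)),
        hpadd _ _ (negPart_nonneg _) (negPart_nonneg _)]
    have h2 : p ((x + y)⁻ + (x⁺ + y⁺)) = p (x + y)⁻ + (p x⁺ + p y⁺) := by
      rw [hpadd _ _ (negPart_nonneg _) (add_nonneg (posPart_nonneg _) (posPart_nonneg _)),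
        hpadd _ _ (posPart_nonneg _) (posPart_nonneg _)]
    have h3 : p (x + y)⁺ + (p x⁻ + p y⁻) = p (x + y)⁻ + (p x⁺ + p y⁺) := by
      rw [← h1, ← h2, key]
    rw [sub_add_sub_comm, sub_eq_sub_iff_add_eq_add, h3]
    abel
  have hqsmul : ∀ (c : ℝ) (x : E₁), p (c • x)⁺ - p (c • x)⁻ = c • (p x⁺ - p x⁻) := by
    intro c x
    rcases lt_trichotomy c 0 with hc | rfl | hc
    · have hc' : (0:ℝ) < -c := by linarith
      have e1 : (c • x)⁺ = (-c) • x⁻ := by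
        rw [show c • x = -((-c) • x) by rw [neg_smul, neg_neg], posPart_neg,
          nakano_smul_negPart hc'.le]
      have e2 : (c • x)⁻ = (-c) • x⁺ := by
        rw [show c • x = -((-c) • x) by rw [neg_smul, neg_neg], negPart_neg,
          nakano_smul_posPart hc'.le]
      rw [e1, e2, hpsmul _ _ hc' (negPart_nonneg _), hpsmul _ _ hc' (posPart_nonneg _),
        smul_sub, neg_smul, neg_smul]
      abel
    · simp [hp0]
    · rw [nakano_smul_posPart hc.le, nakano_smul_negPart hc.le,
        hpsmul _ _ hc (posPart_nonneg _), hpsmul _ _ hc (negPart_nonneg _), smul_sub]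
  set R : E₁ →ₗ[ℝ] E₂ :=
    { toFun := fun x => p x⁺ - p x⁻
      map_add' := hqadd
      map_smul' := hqsmul } with hRdef
  have hRpos : ∀ x : E₁, 0 ≤ x → R x = p x := by
    intro x hx
    show p x⁺ - p x⁻ = p x
    rw [posPart_eq_self.mpr hx, negPart_eq_zero.mpr hx, hp0, sub_zero]
  have hTR : opLe T R := by
    intro x hx
    rw [hRpos x hx]
    exact (hp x hx).1 ⟨x, by rw [Set.mem_setOf_eq, abs_of_nonneg hx], rfl⟩
  have hTR' : opLe (-T) R := by
    intro x hx
    rw [hRpos x hx, LinearMap.neg_apply, ← map_neg]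
    exact (hp x hx).1 ⟨-x, by rw [Set.mem_setOf_eq, abs_neg, abs_of_nonneg hx], rfl⟩
  have haTR : opLe aT R := hmT.2.2 R hTR hTR'
  -- now the topological argument
  refine continuous_of_continuousAt_zero S ?_
  rw [ContinuousAt, map_zero]
  rw [hls₂.tendsto_right_iff]
  rintro W ⟨hWn, hWs⟩
  simp only [id]
  -- order bounded neighborhood
  obtain ⟨V, hVn, a, b, hVab⟩ := hV
  obtain ⟨V', ⟨hV'n, hV's⟩, hV'sub⟩ := hls₂.mem_iff.mp hVn
  have hbV' : ∀ v ∈ V', v ≤ b := by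
    intro v hv
    have habsv : |v| ∈ V' := hV's (le_of_eq (abs_abs v)) hv
    exact (le_abs_self v).trans (hVab (hV'sub habsv)).2
  have hb0 : (0 : E₂) ≤ b := hbV' 0 (mem_of_mem_nhds hV'n)
  -- choose ε > 0 with ε • b ∈ W
  have hcont : ContinuousAt (fun t : ℝ => t • b) 0 :=
    (continuous_id.smul continuous_const).continuousAt
  have h0 : (fun t : ℝ => t • b) ⁻¹' W ∈ 𝓝 (0 : ℝ) :=
    hcont.preimage_mem_nhds (by simpa using hWn)
  have h1 : (fun t : ℝ => t • b) ⁻¹' W ∈ 𝓝[>] (0 : ℝ) := nhdsWithin_le_nhds h0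
  obtain ⟨ε, hεW, hεpos⟩ :=
    Filter.nonempty_of_mem (Filter.inter_mem h1 self_mem_nhdsWithin)
  rw [Set.mem_Ioi] at hεpos
  -- choose solid U with T '' U ⊆ ε • V'
  have hU'n : (fun x : E₂ => ε⁻¹ • x) ⁻¹' V' ∈ 𝓝 (0 : E₂) :=
    (continuous_const_smul (ε⁻¹ : ℝ)).continuousAt.preimage_mem_nhds (by simpa using hV'n)
  have hTU : T ⁻¹' ((fun x : E₂ => ε⁻¹ • x) ⁻¹' V') ∈ 𝓝 (0 : E₁) :=
    hTc.continuousAt.preimage_mem_nhds (by simpa using hU'n)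
  obtain ⟨U, ⟨hUn, hUs⟩, hUsub⟩ := hls₁.mem_iff.mp hTU
  filter_upwards [hUn] with x hx
  -- the main estimate
  have hxabs : |x| ∈ U := hUs (le_of_eq (abs_abs x)) hx
  have hub : p |x| ≤ ε • b := by
    refine (hp |x| (abs_nonneg x)).2 ?_
    rintro _ ⟨y, hy, rfl⟩
    have hyU : y ∈ U := hUs (hy.trans_eq (abs_abs x).symm) hxabs
    have hv' : ε⁻¹ • T y ∈ V' := hUsub hyU
    have h2 : ε⁻¹ • T y ≤ b := hbV' _ hv'
    calc T y = ε • (ε⁻¹ • T y) := (smul_inv_smul₀ hεpos.ne' _).symm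
      _ ≤ ε • b := smul_le_smul_of_nonneg_left h2 hεpos.le
  have hSx : |S x| ≤ ε • b := by
    calc |S x| ≤ aS |x| := habs S aS hmS x
      _ ≤ aT |x| := hle _ (abs_nonneg x)
      _ ≤ R |x| := haTR _ (abs_nonneg x)
      _ = p |x| := hRpos _ (abs_nonneg x)
      _ ≤ ε • b := hub
  refine hWs (y := ε • b) ?_ hεW
  rwa [abs_of_nonneg (smul_nonneg hεpos.le hb0)]
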